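/- Let γ > 0 and let λ : [0,∞) → ℝ be continuous with inf_{x≥0} λ(x) > 0 and sup_{x≥0} λ(x) < ∞, and let J′ : [0,∞) → ℝ be nondecreasing. For a nonnegative r ∈ L^{2,γ} define F(r)(x) := J′( ∫₀ˣ λ(v) r(v) dv ) · λ(x) · r(x). If there exists a constant c > 0 such that ‖F(r)‖_{L^{2,γ}} ≤ c (1 + ‖r‖_{L^{2,γ}}) for every nonnegative r ∈ L^{2,γ}, then J′ is bounded on [0,+∞). -/

import Mathlib

open MeasureTheory

/-- The `L^{2,γ}` norm of a function on `[0,∞)` (valued in `ℝ≥0∞`):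
`‖f‖_{L^{2,γ}} = (∫₀^∞ |f(x)|² e^{γx} dx)^{1/2}`. -/
noncomputable def L2gammaNorm (γ : ℝ) (f : ℝ → ℝ) : ENNReal :=
  (∫⁻ x in Set.Ioi (0 : ℝ), ENNReal.ofReal (f x ^ 2 * Real.exp (γ * x))) ^ ((1 : ℝ) / 2)

/-- If the drift transformation `F(r)(x) = J′(∫₀ˣ λ(v) r(v) dv) λ(x) r(x)` has linear
growth on the positive cone of `L^{2,γ}`, then `J′` is bounded on `[0,∞)`. -/
theorem jprime_bounded_of_linear_growth (γ : ℝ) (hγ : 0 < γ)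
    (lam : ℝ → ℝ) (hlam_cont : Continuous lam)
    (hinf : ∃ la : ℝ, 0 < la ∧ ∀ x : ℝ, 0 ≤ x → la ≤ lam x)
    (hsup : ∃ lb : ℝ, ∀ x : ℝ, 0 ≤ x → lam x ≤ lb)
    (J' : ℝ → ℝ) (hJmono : ∀ ⦃y z : ℝ⦄, 0 ≤ y → y ≤ z → J' y ≤ J' z)
    (c : ℝ) (hc : 0 < c)
    (hlin : ∀ r : ℝ → ℝ, Measurable r → (∀ x, 0 ≤ r x) → L2gammaNorm γ r ≠ ⊤ →
      L2gammaNorm γ (fun x => J' (∫ v in (0 : ℝ)..x, lam v * r v) * lam x * r x)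
        ≤ ENNReal.ofReal c * (1 + L2gammaNorm γ r)) :
    ∃ C : ℝ, ∀ z : ℝ, 0 ≤ z → |J' z| ≤ C := by
  obtain ⟨la, hla0, hla⟩ := hinf
  set s2 : ℝ := Real.sqrt 2 with hs2
  have hs2pos : 0 < s2 := Real.sqrt_pos.mpr (by norm_num)
  set K : ℝ := s2 * c * (1 + Real.exp (γ / 2)) / la with hKdef
  have hexp : 0 < Real.exp (γ / 2) := Real.exp_pos _
  have hKnn : 0 ≤ K := div_nonneg
    (mul_nonneg (mul_nonneg hs2pos.le hc.le) (by linarith)) hla0.le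
  -- main claim: J' z ≤ K for z ≥ la/2
  have key : ∀ z : ℝ, la / 2 ≤ z → J' z ≤ K := by
    intro z hz
    rcases le_or_gt (J' z) 0 with hq | hq
    · linarith
    have hzpos : 0 < z := lt_of_lt_of_le (by linarith) hz
    set A : ℝ := 2 * z / la with hA
    have hA1 : 1 ≤ A := by rw [hA, le_div_iff₀ hla0]; linarith
    have hA0 : 0 < A := lt_of_lt_of_le one_pos hA1
    have hzA : z = A * la / 2 := by rw [hA]; field_simp
    set r : ℝ → ℝ := (Set.Ioc (0:ℝ) 1).indicator (fun _ => A) with hr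
    have hrmeas : Measurable r := measurable_const.indicator measurableSet_Ioc
    have hrnn : ∀ x, 0 ≤ r x := fun x => Set.indicator_nonneg (fun _ _ => hA0.le) x
    -- norm of r
    have hrint : ∫⁻ x in Set.Ioi (0:ℝ), ENNReal.ofReal (r x ^ 2 * Real.exp (γ * x))
        ≤ ENNReal.ofReal (A ^ 2 * Real.exp γ) := by
      calc ∫⁻ x in Set.Ioi (0:ℝ), ENNReal.ofReal (r x ^ 2 * Real.exp (γ * x))
          ≤ ∫⁻ x, ENNReal.ofReal (r x ^ 2 * Real.exp (γ * x)) :=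
            setLIntegral_le_lintegral _ _
        _ ≤ ∫⁻ x, (Set.Ioc (0:ℝ) 1).indicator
              (fun _ => ENNReal.ofReal (A ^ 2 * Real.exp γ)) x := by
            apply lintegral_mono
            intro x
            show ENNReal.ofReal (r x ^ 2 * Real.exp (γ * x)) ≤ (Set.Ioc (0:ℝ) 1).indicator
              (fun _ => ENNReal.ofReal (A ^ 2 * Real.exp γ)) x
            by_cases hx : x ∈ Set.Ioc (0:ℝ) 1
            · have hrx : r x = A := by
                rw [hr]; exact Set.indicator_of_mem hx _
              rw [hrx, Set.indicator_of_mem hx]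
              apply ENNReal.ofReal_le_ofReal
              have h1 : Real.exp (γ * x) ≤ Real.exp γ :=
                Real.exp_le_exp.mpr (by nlinarith [hx.1, hx.2])
              nlinarith [sq_nonneg A, Real.exp_pos (γ * x)]
            · have hrx : r x = 0 := by
                rw [hr]; exact Set.indicator_of_notMem hx _
              rw [hrx, Set.indicator_of_notMem hx]
              simp
        _ = ENNReal.ofReal (A ^ 2 * Real.exp γ) * volume (Set.Ioc (0:ℝ) 1) := by
            rw [lintegral_indicator measurableSet_Ioc, setLIntegral_const]
        _ = ENNReal.ofReal (A ^ 2 * Real.exp γ) := by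
            rw [Real.volume_Ioc]; norm_num
    have hrnorm : L2gammaNorm γ r ≤ ENNReal.ofReal (A * Real.exp (γ / 2)) := by
      have h1 : (ENNReal.ofReal (A ^ 2 * Real.exp γ)) ^ ((1:ℝ)/2)
          = ENNReal.ofReal (A * Real.exp (γ / 2)) := by
        rw [ENNReal.ofReal_rpow_of_nonneg (by positivity) (by norm_num)]
        congr 1
        rw [← Real.sqrt_eq_rpow]
        have he : Real.exp (γ / 2) * Real.exp (γ / 2) = Real.exp γ := by
          rw [← Real.exp_add]; ring_nf
        have : A ^ 2 * Real.exp γ = (A * Real.exp (γ / 2)) ^ 2 := by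
          nlinarith
        rw [this, Real.sqrt_sq (by positivity)]
      rw [L2gammaNorm, ← h1]
      exact ENNReal.rpow_le_rpow hrint (by norm_num)
    have hrfin : L2gammaNorm γ r ≠ ⊤ :=
      ne_top_of_le_ne_top ENNReal.ofReal_ne_top hrnorm
    -- lower bound for F on Ioc (1/2) 1
    set P : ℝ := J' z * la * A with hP
    have hPpos : 0 < P := by positivity
    have hF : ∀ x ∈ Set.Ioc (1/2 : ℝ) 1,
        P ≤ J' (∫ v in (0:ℝ)..x, lam v * r v) * lam x * r x := by
      intro x hx
      have hx0 : (0:ℝ) < x := lt_trans (by norm_num) hx.1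
      have hrx : r x = A := by
        rw [hr]; exact Set.indicator_of_mem (Set.mem_Ioc.mpr ⟨hx0, hx.2⟩) _
      have hIeq : (∫ v in (0:ℝ)..x, lam v * r v) = (∫ v in (0:ℝ)..x, lam v) * A := by
        rw [← intervalIntegral.integral_mul_const]
        apply intervalIntegral.integral_congr_ae
        apply Filter.Eventually.of_forall
        intro v hv
        rw [Set.uIoc_of_le hx0.le] at hv
        have hv1 : v ∈ Set.Ioc (0:ℝ) 1 := ⟨hv.1, le_trans hv.2 hx.2⟩
        have hrv : r v = A := by rw [hr]; exact Set.indicator_of_mem hv1 _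
        show lam v * r v = lam v * A
        rw [hrv]
      have hlamint : la * x ≤ ∫ v in (0:ℝ)..x, lam v := by
        have h := intervalIntegral.integral_mono_on (μ := volume) hx0.le
          (intervalIntegrable_const (c := la)) (hlam_cont.intervalIntegrable 0 x)
          (fun v hv => hla v hv.1)
        rwa [intervalIntegral.integral_const, sub_zero, smul_eq_mul, mul_comm] at h
      have hIz : z ≤ ∫ v in (0:ℝ)..x, lam v * r v := by
        rw [hIeq, hzA]
        have : la * (1/2) ≤ la * x := by
          apply mul_le_mul_of_nonneg_left (le_of_lt hx.1) hla0.le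
        nlinarith
      have hJ : J' z ≤ J' (∫ v in (0:ℝ)..x, lam v * r v) := hJmono hzpos.le hIz
      have hlamx : la ≤ lam x := hla x hx0.le
      rw [hrx, hP]
      have h1 : J' z * la ≤ J' (∫ v in (0:ℝ)..x, lam v * r v) * lam x :=
        mul_le_mul hJ hlamx hla0.le (le_trans hq.le hJ)
      exact mul_le_mul_of_nonneg_right h1 hA0.le
    -- lower bound for L2gammaNorm of F
    set F : ℝ → ℝ := fun x => J' (∫ v in (0:ℝ)..x, lam v * r v) * lam x * r x with hFdef
    have hFint : ENNReal.ofReal (P ^ 2 / 2)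
        ≤ ∫⁻ x in Set.Ioi (0:ℝ), ENNReal.ofReal (F x ^ 2 * Real.exp (γ * x)) := by
      calc ENNReal.ofReal (P ^ 2 / 2)
          = ENNReal.ofReal (P ^ 2) * volume (Set.Ioc (1/2 : ℝ) 1) := by
            rw [Real.volume_Ioc, ← ENNReal.ofReal_mul (by positivity)]
            congr 1
            ring
        _ = ∫⁻ x in Set.Ioc (1/2 : ℝ) 1, ENNReal.ofReal (P ^ 2) := by
            rw [setLIntegral_const]
        _ ≤ ∫⁻ x in Set.Ioc (1/2 : ℝ) 1, ENNReal.ofReal (F x ^ 2 * Real.exp (γ * x)) := by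
            apply lintegral_mono_ae
            filter_upwards [ae_restrict_mem measurableSet_Ioc] with x hx
            apply ENNReal.ofReal_le_ofReal
            have h1 : P ≤ F x := hF x hx
            have h2 : (1:ℝ) ≤ Real.exp (γ * x) := by
              rw [Real.one_le_exp_iff]
              have : (0:ℝ) < x := lt_trans (by norm_num) hx.1
              positivity
            have h3 : P ^ 2 ≤ F x ^ 2 := pow_le_pow_left₀ hPpos.le h1 2
            nlinarith [mul_le_mul_of_nonneg_left h2 (sq_nonneg (F x))]
        _ ≤ ∫⁻ x in Set.Ioi (0:ℝ), ENNReal.ofReal (F x ^ 2 * Real.exp (γ * x)) := by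
            apply lintegral_mono_set
            intro x hx
            exact lt_trans (by norm_num) hx.1
    have hFnorm : ENNReal.ofReal (P / s2) ≤ L2gammaNorm γ F := by
      have h1 : (ENNReal.ofReal (P ^ 2 / 2)) ^ ((1:ℝ)/2) = ENNReal.ofReal (P / s2) := by
        rw [ENNReal.ofReal_rpow_of_nonneg (by positivity) (by norm_num)]
        congr 1
        rw [← Real.sqrt_eq_rpow, Real.sqrt_div (sq_nonneg P), Real.sqrt_sq hPpos.le]
      rw [L2gammaNorm, ← h1]
      exact ENNReal.rpow_le_rpow hFint (by norm_num)
    -- apply hlin and combine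
    have hmain := hlin r hrmeas hrnn hrfin
    have hRHS : ENNReal.ofReal c * (1 + L2gammaNorm γ r)
        ≤ ENNReal.ofReal (c * (1 + A * Real.exp (γ / 2))) := by
      calc ENNReal.ofReal c * (1 + L2gammaNorm γ r)
          ≤ ENNReal.ofReal c * (1 + ENNReal.ofReal (A * Real.exp (γ / 2))) := by
            exact mul_le_mul_right (add_le_add_right hrnorm 1) _
        _ = ENNReal.ofReal (c * (1 + A * Real.exp (γ / 2))) := by
            rw [← ENNReal.ofReal_one, ← ENNReal.ofReal_add (by norm_num) (by positivity),
              ← ENNReal.ofReal_mul hc.le]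
    have hcomb : ENNReal.ofReal (P / s2) ≤ ENNReal.ofReal (c * (1 + A * Real.exp (γ / 2))) :=
      le_trans hFnorm (le_trans hmain hRHS)
    have hreal : P / s2 ≤ c * (1 + A * Real.exp (γ / 2)) := by
      have := (ENNReal.ofReal_le_ofReal_iff (by positivity)).mp hcomb
      exact this
    -- conclude J' z ≤ K
    have hPle : P ≤ c * (1 + A * Real.exp (γ / 2)) * s2 := by
      rw [div_le_iff₀ hs2pos] at hreal
      exact hreal
    have hKla : K * la = s2 * c * (1 + Real.exp (γ / 2)) := by
      rw [hKdef, div_mul_cancel₀ _ (ne_of_gt hla0)]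
    have hfinal : P ≤ K * la * A := by
      rw [hKla]
      have h7 : c * (1 + A * Real.exp (γ / 2)) * s2 ≤ s2 * c * (1 + Real.exp (γ / 2)) * A := by
        nlinarith [mul_nonneg (mul_pos hs2pos hc).le (by linarith : (0:ℝ) ≤ A - 1), hexp]
      linarith
    rw [hP] at hfinal
    have hlaA : 0 < la * A := mul_pos hla0 hA0
    have h8 : J' z * (la * A) ≤ K * (la * A) := by
      rw [← mul_assoc, ← mul_assoc]; exact hfinal
    exact le_of_mul_le_mul_right h8 hlaA
  -- assemble
  refine ⟨max K |J' 0|, fun z hz => ?_⟩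
  have h1 : J' z ≤ K := by
    rcases le_or_gt (la / 2) z with h | h
    · exact key z h
    · exact le_trans (hJmono hz h.le) (key _ le_rfl)
  have h2 : J' 0 ≤ J' z := hJmono le_rfl hz
  have h3 := neg_abs_le (J' 0)
  rw [abs_le]
  constructor
  · have := le_max_right K |J' 0|
    linarith
  · have := le_max_left K |J' 0|
    linarith
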